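/- Let (x_k)_{k∈ℕ} ⊆ D and (μ_k)_{k∈ℕ} ⊆ (0,∞) satisfy, for every k: x_{k+1} = p_{μ_k}(x_k) and g(F(x_{k+1})) ≤ h(x_k, x_{k+1}) + (μ_k/2)‖x_{k+1} − x_k‖². Then the sequence (g(F(x_k)))_k is nonincreasing, every x_k lies in the sublevel set { x ∈ D : g(F(x)) ≤ g(F(x₀)) }, and for every N ∈ ℕ: Σ_{k=0}^{N} μ_k ‖x_{k+1} − x_k‖² ≤ 2 (g(F(x₀)) − g(F(x_{N+1}))). In particular, if g∘F is bounded below on D, then Σ_{k} μ_k ‖x_{k+1} − x_k‖² < ∞. -/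

import Mathlib

/-- For a sequence generated by the composite Gauss-Newton iteration satisfying
the descent test, the objective values `g(F(x_k))` are nonincreasing, the iterates stay in the
initial sublevel set, the partial sums `Σ_{k=0}^N μ_k ‖x_{k+1} - x_k‖²` are bounded by
`2 (g(F(x₀)) - g(F(x_{N+1})))`, and summability holds if `g ∘ F` is bounded below on `D`. -/
theorem stmt_17 {n m : ℕ}
    (F : EuclideanSpace ℝ (Fin n) → EuclideanSpace ℝ (Fin m))
    (g : EuclideanSpace ℝ (Fin m) → ℝ)
    (D : Set (EuclideanSpace ℝ (Fin n)))
    (hF : ContDiff ℝ 2 F)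
    (hg : ConvexOn ℝ Set.univ g) (hgc : Continuous g)
    (hDne : D.Nonempty) (hDcl : IsClosed D) (hDcv : Convex ℝ D)
    (p : ℝ → EuclideanSpace ℝ (Fin n) → EuclideanSpace ℝ (Fin n))
    (hp : ∀ μ, 0 < μ → ∀ x, p μ x ∈ D ∧ ∀ z ∈ D,
      g (F x + fderiv ℝ F x (p μ x - x)) + μ / 2 * ‖p μ x - x‖ ^ 2 ≤
      g (F x + fderiv ℝ F x (z - x)) + μ / 2 * ‖z - x‖ ^ 2)
    (x : ℕ → EuclideanSpace ℝ (Fin n)) (μ : ℕ → ℝ)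
    (hxD : ∀ k, x k ∈ D) (hμpos : ∀ k, 0 < μ k)
    (hiter : ∀ k, x (k + 1) = p (μ k) (x k))
    (hdesc : ∀ k, g (F (x (k + 1))) ≤
      g (F (x k) + fderiv ℝ F (x k) (x (k + 1) - x k)) + μ k / 2 * ‖x (k + 1) - x k‖ ^ 2) :
    Antitone (fun k => g (F (x k))) ∧
    (∀ k, x k ∈ D ∧ g (F (x k)) ≤ g (F (x 0))) ∧
    (∀ N : ℕ, ∑ k ∈ Finset.range (N + 1), μ k * ‖x (k + 1) - x k‖ ^ 2 ≤
      2 * (g (F (x 0)) - g (F (x (N + 1))))) ∧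
    ((∃ c : ℝ, ∀ z ∈ D, c ≤ g (F z)) →
      Summable (fun k => μ k * ‖x (k + 1) - x k‖ ^ 2)) := by
  -- Key per-step inequality: g(F x_{k+1}) + μ_k/2 ‖Δ_k‖² ≤ g(F x_k)
  have key : ∀ k, g (F (x (k + 1))) + μ k / 2 * ‖x (k + 1) - x k‖ ^ 2 ≤ g (F (x k)) := by
    intro k
    have hpk := hp (μ k) (hμpos k) (x k)
    rw [← hiter k] at hpk
    obtain ⟨-, hmin⟩ := hpk
    set Δ : EuclideanSpace ℝ (Fin n) := x (k + 1) - x k with hΔ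
    set s : ℝ := ‖Δ‖ ^ 2 with hsdef
    have hs : (0 : ℝ) ≤ s := sq_nonneg _
    set A : ℝ := g (F (x k)) with hA
    set H : ℝ := g (F (x k) + fderiv ℝ F (x k) Δ) with hH
    set a : ℝ := μ k / 2 * s with ha
    have hann : (0 : ℝ) ≤ a := by
      have := (hμpos k).le
      positivity
    have base : H + a ≤ A := by
      have h0 := hmin (x k) (hxD k)
      simpa [sub_self, map_zero, ha, hsdef, hΔ, hA, hH] using h0
    have slope : ∀ t : ℝ, 0 ≤ t → t < 1 → t * a ≤ A - H - a := by
      intro t ht ht1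
      set z : EuclideanSpace ℝ (Fin n) := (1 - t) • x k + t • x (k + 1) with hz
      have hzD : z ∈ D := hDcv (hxD k) (hxD (k + 1)) (by linarith) ht (by ring)
      have hzx : z - x k = t • Δ := by
        rw [hz, hΔ]; module
      have harg : F (x k) + fderiv ℝ F (x k) (z - x k) =
          (1 - t) • F (x k) + t • (F (x k) + fderiv ℝ F (x k) Δ) := by
        rw [hzx, map_smul]; module
      have hconv : g (F (x k) + fderiv ℝ F (x k) (z - x k)) ≤ (1 - t) * A + t * H := by
        rw [harg, hA, hH]
        exact hg.2 (Set.mem_univ _) (Set.mem_univ _) (by linarith) ht (by ring)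
      have hnorm : ‖z - x k‖ ^ 2 = t ^ 2 * s := by
        rw [hzx, hsdef, norm_smul, Real.norm_eq_abs, abs_of_nonneg ht]
        ring
      have h1 := hmin z hzD
      rw [hnorm] at h1
      have h2 : H + a ≤ (1 - t) * A + t * H + μ k / 2 * (t ^ 2 * s) := by
        calc H + a ≤ g (F (x k) + fderiv ℝ F (x k) (z - x k)) + μ k / 2 * (t ^ 2 * s) := h1
          _ ≤ (1 - t) * A + t * H + μ k / 2 * (t ^ 2 * s) := by linarith
      have h1t : (0 : ℝ) < 1 - t := by linarith
      nlinarith [mul_nonneg hann (sub_nonneg.2 ht1.le)]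
    have hkey2 : a ≤ A - H - a := by
      refine le_of_forall_pos_le_add ?_
      intro ε hε
      by_cases hc : a ≤ ε
      · have : (0 : ℝ) ≤ A - H - a := by
          have := slope 0 le_rfl one_pos
          linarith
        linarith
      · push_neg at hc
        have hapos : (0 : ℝ) < a := lt_trans hε hc
        have ht0 : (0 : ℝ) ≤ (a - ε) / a := div_nonneg (by linarith) hapos.le
        have ht1 : (a - ε) / a < 1 := by
          rw [div_lt_one hapos]; linarith
        have := slope ((a - ε) / a) ht0 ht1
        rw [div_mul_cancel₀ _ (ne_of_gt hapos)] at this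
        linarith
    have hthis : g (F (x (k + 1))) ≤ H + a := by
      rw [hH, ha, hsdef, hΔ]; exact hdesc k
    calc g (F (x (k + 1))) + μ k / 2 * ‖x (k + 1) - x k‖ ^ 2
        = g (F (x (k + 1))) + a := by rw [ha, hsdef, hΔ]
      _ ≤ (H + a) + a := by linarith
      _ ≤ A := by linarith
  have hstep : ∀ k, g (F (x (k + 1))) ≤ g (F (x k)) := by
    intro k
    have h1 := key k
    have h2 : (0 : ℝ) ≤ μ k / 2 * ‖x (k + 1) - x k‖ ^ 2 := by
      have := (hμpos k).le; positivity
    linarith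
  have hanti : Antitone fun k => g (F (x k)) := antitone_nat_of_succ_le hstep
  have hsum : ∀ N : ℕ, ∑ k ∈ Finset.range N, μ k * ‖x (k + 1) - x k‖ ^ 2 ≤
      2 * (g (F (x 0)) - g (F (x N))) := by
    intro N
    induction N with
    | zero => simp
    | succ N ih =>
      rw [Finset.sum_range_succ]
      have := key N
      linarith
  refine ⟨hanti, fun k => ⟨hxD k, hanti (Nat.zero_le k)⟩, fun N => hsum (N + 1), ?_⟩
  rintro ⟨c, hc⟩
  refine summable_of_sum_range_le (c := 2 * (g (F (x 0)) - c)) (fun k => ?_) (fun N => ?_)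
  · have := (hμpos k).le; positivity
  · calc ∑ k ∈ Finset.range N, μ k * ‖x (k + 1) - x k‖ ^ 2
        ≤ 2 * (g (F (x 0)) - g (F (x N))) := hsum N
      _ ≤ 2 * (g (F (x 0)) - c) := by
        have := hc (x N) (hxD N)
        linarith
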